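/- Let $I=\{1,\dots,n\}$ and let $I_1\cup\cdots\cup I_k=I$ be a partition into disjoint nonempty sets. Define $\iota_0(K_{\alpha\beta}):=\sum_{a\in I_\alpha,\,b\in I_\beta}K_{ab}$ for $\alpha\ne\beta\in\{1,\dots,k\}$, where the $K_{ab}$ are the Killing tensor functions $K_{ab}(x,p)=(x_ap_b-x_bp_a)^2$ and $K_{\alpha\beta}$ the analogous functions in $k$ variables. Then $\iota_0$ preserves the Kohno-Drinfeld relations: for distinct $\alpha,\beta,\gamma$, $\{\iota_0(K_{\alpha\beta}),\iota_0(K_{\alpha\gamma})+\iota_0(K_{\beta\gamma})\}=0$, and for distinct $\alpha,\beta,\gamma,\delta$, $\{\iota_0(K_{\alpha\beta}),\iota_0(K_{\gamma\delta})\}=0$, under the canonical Poisson bracket on $\mathbb{R}^{2n}$. -/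

import Mathlib

open MvPolynomial

set_option maxHeartbeats 1000000

/-- The canonical Poisson bracket on polynomial functions on `ℝ^{2m}` with
coordinates `x_a` (variables `Sum.inl a`) and `p_a` (variables `Sum.inr a`). -/
noncomputable def poisson {m : ℕ} (F G : MvPolynomial (Fin m ⊕ Fin m) ℝ) :
    MvPolynomial (Fin m ⊕ Fin m) ℝ :=
  ∑ a : Fin m,
    (pderiv (Sum.inl a) F * pderiv (Sum.inr a) G -
      pderiv (Sum.inl a) G * pderiv (Sum.inr a) F)

/-- The quadratic function `K_{ij}(x,p) = (x_i p_j - x_j p_i)^2`. -/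
noncomputable def Kp {m : ℕ} (i j : Fin m) : MvPolynomial (Fin m ⊕ Fin m) ℝ :=
  (X (Sum.inl i) * X (Sum.inr j) - X (Sum.inl j) * X (Sum.inr i)) ^ 2

/-- `ι₀` maps the generator `K_{αβ}` (in `k` variables) to
`∑_{a ∈ I_α, b ∈ I_β} K_{ab}` (in `n` variables). -/
noncomputable def iota0 {n : ℕ} {k : ℕ} (I : Fin k → Finset (Fin n))
    (α β : Fin k) : MvPolynomial (Fin n ⊕ Fin n) ℝ :=
  ∑ a ∈ I α, ∑ b ∈ I β, Kp a b

lemma rel3 : poisson (Kp (0:Fin 3) 1) (Kp 0 2) + poisson (Kp (0:Fin 3) 1) (Kp 1 2) = 0 := by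
  simp only [poisson, Kp, Fin.sum_univ_three]
  simp only [Derivation.leibniz, Derivation.leibniz_pow, map_sub, map_mul, pderiv_X,
    smul_eq_mul, Pi.single_apply, reduceCtorEq, Sum.inl.injEq, Sum.inr.injEq, Fin.reduceEq,
    reduceIte, ite_true, ite_false, mul_zero, zero_mul, mul_one, one_mul, add_zero, zero_add,
    sub_zero, zero_sub]
  ring

lemma rel4 : poisson (Kp (0:Fin 4) 1) (Kp 2 3) = 0 := by
  simp only [poisson, Kp, Fin.sum_univ_four]
  simp only [Derivation.leibniz, Derivation.leibniz_pow, map_sub, map_mul, pderiv_X,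
    smul_eq_mul, Pi.single_apply, reduceCtorEq, Sum.inl.injEq, Sum.inr.injEq, Fin.reduceEq,
    reduceIte, ite_true, ite_false, mul_zero, zero_mul, mul_one, one_mul, add_zero, zero_add,
    sub_zero, zero_sub]
  ring

lemma pderiv_rename_zero {σ τ : Type*} [DecidableEq τ] {g : σ → τ} {j : τ}
    (hj : ∀ i, g i ≠ j) (F : MvPolynomial σ ℝ) : pderiv j (rename g F) = 0 := by
  apply pderiv_eq_zero_of_notMem_vars
  intro hmem
  obtain ⟨i, -, rfl⟩ := Finset.mem_image.mp (vars_rename _ _ hmem)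
  exact hj i rfl

lemma poisson_rename {m m' : ℕ} {f : Fin m → Fin m'} (hf : Function.Injective f)
    (F G : MvPolynomial (Fin m ⊕ Fin m) ℝ) :
    poisson (rename (Sum.map f f) F) (rename (Sum.map f f) G)
      = rename (Sum.map f f) (poisson F G) := by
  classical
  have hinj : Function.Injective (Sum.map f f) := Sum.map_injective.mpr ⟨hf, hf⟩
  have hvan : ∀ a ∈ (Finset.univ : Finset (Fin m')),
      a ∉ Finset.univ.image f →
      (pderiv (Sum.inl a) (rename (Sum.map f f) F) *
          pderiv (Sum.inr a) (rename (Sum.map f f) G) -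
        pderiv (Sum.inl a) (rename (Sum.map f f) G) *
          pderiv (Sum.inr a) (rename (Sum.map f f) F)) = 0 := by
    intro a _ ha
    have hl : ∀ s : Fin m ⊕ Fin m, Sum.map f f s ≠ Sum.inl a := by
      rintro (i | i) h
      · exact ha (Finset.mem_image.mpr ⟨i, Finset.mem_univ i, Sum.inl.inj h⟩)
      · simp at h
    have hr : ∀ s : Fin m ⊕ Fin m, Sum.map f f s ≠ Sum.inr a := by
      rintro (i | i) h
      · simp at h
      · exact ha (Finset.mem_image.mpr ⟨i, Finset.mem_univ i, Sum.inr.inj h⟩)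
    simp [pderiv_rename_zero hl, pderiv_rename_zero hr]
  unfold poisson
  rw [map_sum, ← Finset.sum_subset (Finset.subset_univ (Finset.univ.image f)) hvan,
    Finset.sum_image (fun x _ y _ h => hf h)]
  refine Finset.sum_congr rfl fun i _ => ?_
  have e1 : (Sum.inl (f i) : Fin m' ⊕ Fin m') = Sum.map f f (Sum.inl i) := rfl
  have e2 : (Sum.inr (f i) : Fin m' ⊕ Fin m') = Sum.map f f (Sum.inr i) := rfl
  rw [e1, e2, pderiv_rename hinj, pderiv_rename hinj, pderiv_rename hinj,
    pderiv_rename hinj, map_sub, map_mul, map_mul]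

lemma Kp_rename {m m' : ℕ} (f : Fin m → Fin m') (i j : Fin m) :
    rename (Sum.map f f) (Kp i j) = Kp (f i) (f j) := by
  simp [Kp, map_pow, map_sub, map_mul, rename_X]

lemma Krel {m : ℕ} {a b c : Fin m} (hab : a ≠ b) (hac : a ≠ c) (hbc : b ≠ c) :
    poisson (Kp a b) (Kp a c) + poisson (Kp a b) (Kp b c) = 0 := by
  let f : Fin 3 → Fin m := ![a, b, c]
  have hf : Function.Injective f := by
    intro i j h
    fin_cases i <;> fin_cases j <;> simp_all [f]
  have h01 : Kp a b = rename (Sum.map f f) (Kp (0:Fin 3) 1) := by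
    rw [Kp_rename]; rfl
  have h02 : Kp a c = rename (Sum.map f f) (Kp (0:Fin 3) 2) := by
    rw [Kp_rename]; rfl
  have h12 : Kp b c = rename (Sum.map f f) (Kp (1:Fin 3) 2) := by
    rw [Kp_rename]; rfl
  rw [h01, h02, h12, poisson_rename hf, poisson_rename hf, ← map_add, rel3, map_zero]

lemma Kzero {m : ℕ} {a b c d : Fin m} (hab : a ≠ b) (hac : a ≠ c) (had : a ≠ d)
    (hbc : b ≠ c) (hbd : b ≠ d) (hcd : c ≠ d) :
    poisson (Kp a b) (Kp c d) = 0 := by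
  let f : Fin 4 → Fin m := ![a, b, c, d]
  have hf : Function.Injective f := by
    intro i j h
    fin_cases i <;> fin_cases j <;> simp_all [f]
  have h01 : Kp a b = rename (Sum.map f f) (Kp (0:Fin 4) 1) := by
    rw [Kp_rename]; rfl
  have h23 : Kp c d = rename (Sum.map f f) (Kp (2:Fin 4) 3) := by
    rw [Kp_rename]; rfl
  rw [h01, h23, poisson_rename hf, rel4, map_zero]

lemma poisson_zero_right {m : ℕ} (F : MvPolynomial (Fin m ⊕ Fin m) ℝ) :
    poisson F 0 = 0 := by
  simp [poisson]

lemma poisson_add_right {m : ℕ} (F G H : MvPolynomial (Fin m ⊕ Fin m) ℝ) :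
    poisson F (G + H) = poisson F G + poisson F H := by
  unfold poisson
  rw [← Finset.sum_add_distrib]
  refine Finset.sum_congr rfl fun a _ => ?_
  simp only [map_add]
  ring

lemma poisson_sum_right {m : ℕ} {ι : Type*} (s : Finset ι)
    (F : MvPolynomial (Fin m ⊕ Fin m) ℝ) (g : ι → MvPolynomial (Fin m ⊕ Fin m) ℝ) :
    poisson F (∑ i ∈ s, g i) = ∑ i ∈ s, poisson F (g i) := by
  classical
  induction s using Finset.induction_on with
  | empty => simp [poisson_zero_right]
  | insert _ _ h ih =>
      rw [Finset.sum_insert h, Finset.sum_insert h, poisson_add_right, ih]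

lemma poisson_zero_left {m : ℕ} (G : MvPolynomial (Fin m ⊕ Fin m) ℝ) :
    poisson 0 G = 0 := by
  simp [poisson]

lemma poisson_add_left {m : ℕ} (F G H : MvPolynomial (Fin m ⊕ Fin m) ℝ) :
    poisson (F + G) H = poisson F H + poisson G H := by
  unfold poisson
  rw [← Finset.sum_add_distrib]
  refine Finset.sum_congr rfl fun a _ => ?_
  simp only [map_add]
  ring

lemma poisson_sum_left {m : ℕ} {ι : Type*} (s : Finset ι)
    (g : ι → MvPolynomial (Fin m ⊕ Fin m) ℝ) (G : MvPolynomial (Fin m ⊕ Fin m) ℝ) :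
    poisson (∑ i ∈ s, g i) G = ∑ i ∈ s, poisson (g i) G := by
  classical
  induction s using Finset.induction_on with
  | empty => simp [poisson_zero_left]
  | insert _ _ h ih =>
      rw [Finset.sum_insert h, Finset.sum_insert h, poisson_add_left, ih]

theorem stmt13 (n k : ℕ) (I : Fin k → Finset (Fin n))
    (hne : ∀ α, (I α).Nonempty)
    (hdisj : ∀ α β, α ≠ β → Disjoint (I α) (I β))
    (hcover : ∀ a : Fin n, ∃ α, a ∈ I α) :
    (∀ α β γ : Fin k, α ≠ β → α ≠ γ → β ≠ γ →
        poisson (iota0 I α β) (iota0 I α γ + iota0 I β γ) = 0) ∧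
    (∀ α β γ δ : Fin k, α ≠ β → α ≠ γ → α ≠ δ → β ≠ γ → β ≠ δ → γ ≠ δ →
        poisson (iota0 I α β) (iota0 I γ δ) = 0) := by
  have hd : ∀ {α β : Fin k} {a b : Fin n}, α ≠ β → a ∈ I α → b ∈ I β → a ≠ b := by
    intro α β a b h ha hb
    exact fun hab => (Finset.disjoint_left.mp (hdisj α β h) ha) (hab ▸ hb)
  constructor
  · intro α β γ hαβ hαγ hβγ
    unfold iota0
    rw [poisson_sum_left]
    refine Finset.sum_eq_zero fun a ha => ?_
    rw [poisson_sum_left]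
    refine Finset.sum_eq_zero fun b hb => ?_
    rw [poisson_add_right, poisson_sum_right, poisson_sum_right]
    have h1 : ∀ a' ∈ I α, poisson (Kp a b) (∑ c ∈ I γ, Kp a' c)
        = if a' = a then ∑ c ∈ I γ, poisson (Kp a b) (Kp a c) else 0 := by
      intro a' ha'
      rw [poisson_sum_right]
      by_cases h : a' = a
      · subst h; simp
      · rw [if_neg h]
        refine Finset.sum_eq_zero fun c hc => ?_
        exact Kzero (hd hαβ ha hb) (Ne.symm h) (hd hαγ ha hc)
          (Ne.symm (hd hαβ ha' hb)) (hd hβγ hb hc) (hd hαγ ha' hc)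
    have h2 : ∀ b' ∈ I β, poisson (Kp a b) (∑ c ∈ I γ, Kp b' c)
        = if b' = b then ∑ c ∈ I γ, poisson (Kp a b) (Kp b c) else 0 := by
      intro b' hb'
      rw [poisson_sum_right]
      by_cases h : b' = b
      · subst h; simp
      · rw [if_neg h]
        refine Finset.sum_eq_zero fun c hc => ?_
        exact Kzero (hd hαβ ha hb) (hd hαβ ha hb') (hd hαγ ha hc)
          (Ne.symm h) (hd hβγ hb hc) (hd hβγ hb' hc)
    rw [Finset.sum_congr rfl h1, Finset.sum_congr rfl h2,
      Finset.sum_ite_eq' (I α) a, Finset.sum_ite_eq' (I β) b, if_pos ha, if_pos hb,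
      ← Finset.sum_add_distrib]
    refine Finset.sum_eq_zero fun c hc => ?_
    exact Krel (hd hαβ ha hb) (hd hαγ ha hc) (hd hβγ hb hc)
  · intro α β γ δ hαβ hαγ hαδ hβγ hβδ hγδ
    unfold iota0
    rw [poisson_sum_left]
    refine Finset.sum_eq_zero fun a ha => ?_
    rw [poisson_sum_left]
    refine Finset.sum_eq_zero fun b hb => ?_
    rw [poisson_sum_right]
    refine Finset.sum_eq_zero fun c hc => ?_
    rw [poisson_sum_right]
    refine Finset.sum_eq_zero fun d hd' => ?_
    exact Kzero (hd hαβ ha hb) (hd hαγ ha hc) (hd hαδ ha hd')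
      (hd hβγ hb hc) (hd hβδ hb hd') (hd hγδ hc hd')
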